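/- Let $t_1, \ldots, t_d > 0$ and let $F_1, \ldots, F_d$ be the recursively defined $2^{d-1} \times 2^{d-1}$ pairwise anti-commuting self-adjoint unitaries. Then $\|t_1 F_1 \otimes F_1 + \cdots + t_d F_d \otimes F_d\| = t_1 + \cdots + t_d$. -/

import Mathlib

open Matrix Kronecker

noncomputable def pauliX : Matrix (Fin 2) (Fin 2) ℂ := !![0, 1; 1, 0]
noncomputable def pauliZ : Matrix (Fin 2) (Fin 2) ℂ := !![1, 0; 0, -1]

/-- The recursively defined matrices `F j ^ [d]` of size `2 ^ (d-1)`: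
`F 1 ^ [1] = 1`, `F j ^ [d] = σₓ ⊗ F j ^ [d-1]` for `j < d`, and `F d ^ [d] = σ_z ⊗ I`. -/
noncomputable def Fmat : (d : ℕ) → Fin d → Matrix (Fin (2 ^ (d - 1))) (Fin (2 ^ (d - 1))) ℂ
  | 0 => fun j => j.elim0
  | 1 => fun _ => 1
  | (d + 2) => fun j =>
    if h : (j : ℕ) < d + 1 then
      Matrix.reindex
        (finProdFinEquiv.trans (finCongr (by rw [show d + 1 - 1 = d from rfl,
          show d + 2 - 1 = d + 1 from rfl, pow_succ]; ring)))
        (finProdFinEquiv.trans (finCongr (by rw [show d + 1 - 1 = d from rfl,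
          show d + 2 - 1 = d + 1 from rfl, pow_succ]; ring)))
        (pauliX ⊗ₖ Fmat (d + 1) ⟨j, h⟩)
    else
      Matrix.reindex
        (finProdFinEquiv.trans (finCongr (by rw [show d + 2 - 1 = d + 1 from rfl, pow_succ]; ring)))
        (finProdFinEquiv.trans (finCongr (by rw [show d + 2 - 1 = d + 1 from rfl, pow_succ]; ring)))
        (pauliZ ⊗ₖ (1 : Matrix (Fin (2 ^ d)) (Fin (2 ^ d)) ℂ))

lemma pauliX_transpose : pauliXᵀ = pauliX := by
  ext i j; fin_cases i <;> fin_cases j <;> rfl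

lemma pauliZ_transpose : pauliZᵀ = pauliZ := by
  ext i j; fin_cases i <;> fin_cases j <;> rfl

lemma pauliX_mul_self : pauliX * pauliX = 1 := by
  simp [pauliX, Matrix.mul_fin_two, Matrix.one_fin_two]

lemma pauliZ_mul_self : pauliZ * pauliZ = 1 := by
  simp [pauliZ, Matrix.mul_fin_two, Matrix.one_fin_two]

lemma Fmat_transpose : ∀ (d : ℕ) (j : Fin d), (Fmat d j)ᵀ = Fmat d j
  | 0, j => j.elim0
  | 1, j => by simp [Fmat]
  | (d + 2), j => by
    simp only [Fmat]
    split_ifs with h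
    · rw [Matrix.transpose_reindex, ← Matrix.kroneckerMap_transpose,
        pauliX_transpose, Fmat_transpose (d + 1) ⟨j, h⟩]
    · rw [Matrix.transpose_reindex, ← Matrix.kroneckerMap_transpose,
        pauliZ_transpose, Matrix.transpose_one]

lemma reindex_mul_reindex {m n : Type*} [Fintype m] [Fintype n] [DecidableEq m] [DecidableEq n]
    (e : m ≃ n) (A B : Matrix m m ℂ) :
    Matrix.reindex e e A * Matrix.reindex e e B = Matrix.reindex e e (A * B) := by
  simp [Matrix.reindex_apply, Matrix.submatrix_mul_equiv]

lemma Fmat_mul_self : ∀ (d : ℕ) (j : Fin d), Fmat d j * Fmat d j = 1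
  | 0, j => j.elim0
  | 1, j => by simp [Fmat]
  | (d + 2), j => by
    simp only [Fmat]
    split_ifs with h
    · rw [reindex_mul_reindex, ← Matrix.mul_kronecker_mul, pauliX_mul_self,
        Fmat_mul_self (d + 1) ⟨j, h⟩, Matrix.one_kronecker_one,
        Matrix.reindex_apply, Matrix.submatrix_one_equiv]
    · rw [reindex_mul_reindex, ← Matrix.mul_kronecker_mul, pauliZ_mul_self, one_mul,
        Matrix.one_kronecker_one, Matrix.reindex_apply, Matrix.submatrix_one_equiv]

lemma kron_conjTranspose (m n : ℕ) (A : Matrix (Fin m) (Fin m) ℂ) (B : Matrix (Fin n) (Fin n) ℂ) :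
    (A ⊗ₖ B)ᴴ = Aᴴ ⊗ₖ Bᴴ := by
  ext ⟨a, b⟩ ⟨c, e⟩
  simp [Matrix.conjTranspose_apply, star_mul']

lemma pauliX_conjTranspose : pauliXᴴ = pauliX := by
  ext i j; fin_cases i <;> fin_cases j <;> simp [pauliX]

lemma pauliZ_conjTranspose : pauliZᴴ = pauliZ := by
  ext i j; fin_cases i <;> fin_cases j <;> simp [pauliZ]

lemma Fmat_conjTranspose : ∀ (d : ℕ) (j : Fin d), (Fmat d j)ᴴ = Fmat d j
  | 0, j => j.elim0
  | 1, j => by simp [Fmat]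
  | (d + 2), j => by
    simp only [Fmat]
    split_ifs with h
    · rw [Matrix.conjTranspose_reindex, kron_conjTranspose,
        pauliX_conjTranspose, Fmat_conjTranspose (d + 1) ⟨j, h⟩]
    · rw [Matrix.conjTranspose_reindex, kron_conjTranspose,
        pauliZ_conjTranspose, Matrix.conjTranspose_one]

lemma Fmat_row_dot (d : ℕ) (j : Fin d) (a b : Fin (2 ^ (d - 1))) :
    ∑ c, Fmat d j a c * Fmat d j b c = if a = b then 1 else 0 := by
  have hsym : ∀ x y, Fmat d j x y = Fmat d j y x := by
    intro x y
    conv_lhs => rw [← Fmat_transpose d j]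
    rw [Matrix.transpose_apply]
  calc ∑ c, Fmat d j a c * Fmat d j b c
      = ∑ c, Fmat d j a c * Fmat d j c b := by
        refine Finset.sum_congr rfl fun c _ => ?_
        rw [hsym b c]
    _ = (Fmat d j * Fmat d j) a b := (Matrix.mul_apply).symm
    _ = (1 : Matrix _ _ ℂ) a b := by rw [Fmat_mul_self]
    _ = if a = b then 1 else 0 := Matrix.one_apply

lemma Fmat_kron_mulVec (d : ℕ) (j : Fin d) :
    (Fmat d j ⊗ₖ Fmat d j) *ᵥ (fun p => if p.1 = p.2 then (1 : ℂ) else 0)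
      = fun p => if p.1 = p.2 then (1 : ℂ) else 0 := by
  funext p
  obtain ⟨a, b⟩ := p
  simp only [Matrix.mulVec, dotProduct, Fintype.sum_prod_type,
    Matrix.kroneckerMap_apply]
  calc ∑ c, ∑ e, Fmat d j a c * Fmat d j b e * (if c = e then (1 : ℂ) else 0)
      = ∑ c, Fmat d j a c * Fmat d j b c := by
        refine Finset.sum_congr rfl fun c _ => ?_
        simp [mul_ite]
    _ = if a = b then 1 else 0 := Fmat_row_dot d j a b

set_option maxHeartbeats 1000000 in
set_option synthInstance.maxHeartbeats 400000 in
/-- For positive reals `t 1, …, t d` and the recursively defined anti-commuting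
self-adjoint unitaries `F 1, …, F d`, one has
`‖t 1 • F 1 ⊗ F 1 + ⋯ + t d • F d ⊗ F d‖ = t 1 + ⋯ + t d`. -/
theorem Fmat_kron_weighted_sum_norm (d : ℕ) (hd : 1 ≤ d)
    (t : Fin d → ℝ) (ht : ∀ j, 0 < t j) :
    ‖Matrix.toEuclideanCLM (𝕜 := ℂ)
        ((∑ j : Fin d, (t j : ℂ) • (Fmat d j ⊗ₖ Fmat d j) :
          Matrix (Fin (2 ^ (d - 1)) × Fin (2 ^ (d - 1)))
            (Fin (2 ^ (d - 1)) × Fin (2 ^ (d - 1))) ℂ))‖ = ∑ j, t j := by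
  classical
  haveI : Nonempty (Fin (2 ^ (d - 1))) := ⟨⟨0, Nat.pow_pos (by norm_num)⟩⟩
  set U := Matrix.toEuclideanCLM (𝕜 := ℂ)
      ((∑ j : Fin d, (t j : ℂ) • (Fmat d j ⊗ₖ Fmat d j) :
        Matrix (Fin (2 ^ (d - 1)) × Fin (2 ^ (d - 1)))
          (Fin (2 ^ (d - 1)) × Fin (2 ^ (d - 1))) ℂ)) with hUdef
  set v0 : Fin (2 ^ (d - 1)) × Fin (2 ^ (d - 1)) → ℂ :=
    fun p => if p.1 = p.2 then 1 else 0 with hv0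
  set v : EuclideanSpace ℂ (Fin (2 ^ (d - 1)) × Fin (2 ^ (d - 1))) :=
    (WithLp.equiv 2 _).symm v0 with hv
  -- each unitary has norm 1
  have hUj : ∀ j : Fin d,
      ‖Matrix.toEuclideanCLM (𝕜 := ℂ) (Fmat d j ⊗ₖ Fmat d j)‖ = 1 := by
    intro j
    set u := Matrix.toEuclideanCLM (𝕜 := ℂ) (Fmat d j ⊗ₖ Fmat d j) with hu
    have hstar : star u * u = 1 := by
      rw [hu, ← map_star, ← _root_.map_mul, ← _root_.map_one (Matrix.toEuclideanCLM (𝕜 := ℂ))]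
      congr 1
      rw [Matrix.star_eq_conjTranspose, kron_conjTranspose, Fmat_conjTranspose,
        ← Matrix.mul_kronecker_mul, Fmat_mul_self, Matrix.one_kronecker_one]
    have h2 : ‖u‖ * ‖u‖ = 1 := by
      rw [← CStarRing.norm_star_mul_self, hstar, norm_one]
    nlinarith [norm_nonneg u]
  -- U as a sum of CLMs
  have hU : U = ∑ j : Fin d,
      (t j : ℂ) • Matrix.toEuclideanCLM (𝕜 := ℂ) (Fmat d j ⊗ₖ Fmat d j) := by
    rw [hUdef, map_sum]
    refine Finset.sum_congr rfl fun j _ => ?_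
    rw [_root_.map_smul]
  -- each CLM fixes v
  have hfix : ∀ j : Fin d,
      Matrix.toEuclideanCLM (𝕜 := ℂ) (Fmat d j ⊗ₖ Fmat d j) v = v := by
    intro j
    rw [hv, WithLp.equiv_symm_apply, Matrix.toEuclideanCLM_toLp]
    congr 1
    rw [Fmat_kron_mulVec]
  -- eigenvalue equation
  have heig : U v = ((∑ j, t j : ℝ) : ℂ) • v := by
    rw [hU, ContinuousLinearMap.sum_apply]
    have : ∀ j ∈ Finset.univ, ((t j : ℂ) • Matrix.toEuclideanCLM (𝕜 := ℂ)
        (Fmat d j ⊗ₖ Fmat d j)) v = (t j : ℂ) • v := by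
      intro j _
      rw [ContinuousLinearMap.smul_apply, hfix]
    rw [Finset.sum_congr rfl this, ← Finset.sum_smul]
    congr 1
    push_cast
    rfl
  have hv0ne : v ≠ 0 := by
    intro h
    have := congrFun (congrArg (WithLp.equiv 2 _) h)
      (Classical.arbitrary _, Classical.arbitrary _)
    simp [hv, hv0] at this
  have hvpos : 0 < ‖v‖ := norm_pos_iff.mpr hv0ne
  have htsum : 0 ≤ ∑ j, t j := Finset.sum_nonneg fun j _ => (ht j).le
  -- lower bound
  have hlow : (∑ j, t j) ≤ ‖U‖ := by
    have h1 : ‖U v‖ ≤ ‖U‖ * ‖v‖ := U.le_opNorm v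
    rw [heig, norm_smul, Complex.norm_real, Real.norm_eq_abs, abs_of_nonneg htsum] at h1
    exact le_of_mul_le_mul_right h1 hvpos
  -- upper bound
  have hup : ‖U‖ ≤ ∑ j, t j := by
    rw [hU]
    refine le_trans (norm_sum_le _ _) (le_of_eq ?_)
    refine Finset.sum_congr rfl fun j _ => ?_
    rw [norm_smul ((t j : ℂ)) (Matrix.toEuclideanCLM (𝕜 := ℂ) (Fmat d j ⊗ₖ Fmat d j)),
      hUj, mul_one, Complex.norm_real, Real.norm_eq_abs, abs_of_nonneg (ht j).le]
  linarith
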